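/- Let n > 4 and let f and g be cubic MRS functions in n variables. Then g = μ·f for some permutation μ of {1,...,n} which preserves rotation symmetry if and only if g = σ_{τ,n}·f for some τ with gcd(τ, n) = 1. Consequently, the orbits of the action of the group G_n = {σ_{τ,n} : gcd(τ,n) = 1} on the set C_n of cubic MRS functions in n variables are exactly the equivalence classes of C_n under permutations of variables which preserve rotation symmetry. -/

import Mathlib

set_option linter.unusedSectionVars false


/-- Boolean functions in `n` variables, with variables indexed by `ZMod n`
(index `i : ZMod n` corresponds to the variable `x_{i+1}` in 1-indexed notation,
so that "`a Mod n`" arithmetic on subscripts becomes arithmetic in `ZMod n`). -/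
abbrev BF (n : ℕ) := (ZMod n → ZMod 2) → ZMod 2

/-- The cubic MRS function `(1,j,k)` in `n` variables:
`x ↦ Σ_{i=1}^n x_i x_{(i+j-1) Mod n} x_{(i+k-1) Mod n}`, the sum taken in `GF(2)`. -/
def cubicMRS (n : ℕ) [NeZero n] (j k : ℕ) : BF n :=
  fun x => ∑ i : ZMod n,
    x i * x (i + ((j - 1 : ℕ) : ZMod n)) * x (i + ((k - 1 : ℕ) : ZMod n))

/-- `C_n`: the set of all cubic MRS functions `(1,j,k)`, `1 < j < k ≤ n`, in `n` variables. -/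
def cubicSet (n : ℕ) [NeZero n] : Set (BF n) :=
  {f | ∃ j k : ℕ, 1 < j ∧ j < k ∧ k ≤ n ∧ f = cubicMRS n j k}

/-- The set of cubic MRS functions `(1,j,k)` with `1 < j, k ≤ n`, `j ≠ k`. -/
def cubicSetNe (n : ℕ) [NeZero n] : Set (BF n) :=
  {f | ∃ j k : ℕ, 1 < j ∧ j ≤ n ∧ 1 < k ∧ k ≤ n ∧ j ≠ k ∧ f = cubicMRS n j k}

/-- The action of a permutation `μ` of the variables on a Boolean function:
`(μ·f)(x₁,…,xₙ) = f(x_{μ(1)},…,x_{μ(n)})`. -/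
def permAct {n : ℕ} (μ : Equiv.Perm (ZMod n)) (f : BF n) : BF n :=
  fun x => f (fun i => x (μ i))

/-- A Boolean function is rotation symmetric if it is invariant under the cyclic
shift of the variables. -/
def rotSym {n : ℕ} (f : BF n) : Prop :=
  ∀ x : ZMod n → ZMod 2, f (fun i => x (i + 1)) = f x

/-- A permutation `μ` preserves rotation symmetry (for cubic MRS functions in `n`
variables) if `μ·f` is rotation symmetric for every cubic MRS function `f`. -/
def preservesRS (n : ℕ) [NeZero n] (μ : Equiv.Perm (ZMod n)) : Prop :=
  ∀ f ∈ cubicSetNe n, rotSym (permAct μ f)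

/-- The permutation `σ_{τ,n} : i ↦ ((i-1)τ + 1) Mod n` of the variables, for `τ` a
unit mod `n`; in the 0-indexed coordinates used here it is `i ↦ τ·i` on `ZMod n`. -/
def sigmaPerm {n : ℕ} (u : (ZMod n)ˣ) : Equiv.Perm (ZMod n) where
  toFun := fun i => (u : ZMod n) * i
  invFun := fun i => ((u⁻¹ : (ZMod n)ˣ) : ZMod n) * i
  left_inv := fun i => by simp [← mul_assoc]
  right_inv := fun i => by simp [← mul_assoc]

/-- The orbit of a Boolean function `f` under the action of the group
`G_n = {σ_{τ,n} : gcd(τ,n) = 1}`. -/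
def orbit (n : ℕ) [NeZero n] (f : BF n) : Set (BF n) :=
  {g | ∃ u : (ZMod n)ˣ, g = permAct (sigmaPerm u) f}

/-- The set of orbits of the action of `G_n` on the set `C_n` of cubic MRS functions. -/
def orbitsOn (n : ℕ) [NeZero n] : Set (Set (BF n)) :=
  {S | ∃ f ∈ cubicSet n, S = orbit n f}

namespace RSAux
variable {n : ℕ} [NeZero n]

lemma natCast_val_eq (a : ZMod n) : ((a.val : ℕ) : ZMod n) = a := by
  simp [ZMod.natCast_val, ZMod.cast_id]

lemma cast_ne_zero {k : ℕ} (hk : 0 < k) (hlt : k < n) : ((k : ZMod n) ≠ 0) := by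
  intro h
  rw [ZMod.natCast_eq_zero_iff] at h
  have := Nat.le_of_dvd hk h
  omega

lemma zmod_succ_induction {Q : ZMod n → Prop} (i0 : ZMod n) (h0 : Q i0)
    (hs : ∀ i, Q i → Q (i + 1)) : ∀ i, Q i := by
  have key : ∀ k : ℕ, Q (i0 + (k : ZMod n)) := by
    intro k; induction k with
    | zero => simpa using h0
    | succ m ih =>
      have := hs _ ih
      have he : i0 + ((m : ZMod n)) + 1 = i0 + (((m+1 : ℕ)) : ZMod n) := by push_cast; ring
      rwa [he] at this
  intro i
  have := key (i - i0).val
  rwa [natCast_val_eq, add_sub_cancel] at this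

lemma rotSym_shift {f : BF n} (hf : rotSym f) (β : ZMod n) (x : ZMod n → ZMod 2) :
    f (fun i => x (i + β)) = f x := by
  have key : ∀ (k : ℕ) (x : ZMod n → ZMod 2), f (fun i => x (i + (k : ZMod n))) = f x := by
    intro k
    induction k with
    | zero => intro x; simp
    | succ m ih =>
      intro x
      have h1 : (fun i : ZMod n => x (i + ((m+1 : ℕ) : ZMod n)))
          = (fun i : ZMod n => (fun j : ZMod n => x (j + (m : ZMod n))) (i + 1)) := by
        funext i; push_cast; ring_nf
      rw [h1, hf (fun j => x (j + (m : ZMod n))), ih]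
  have := key β.val x
  rwa [natCast_val_eq] at this

lemma rotSym_sum (a b : ZMod n) :
    rotSym (fun x : ZMod n → ZMod 2 => ∑ i : ZMod n, x i * x (i + a) * x (i + b)) := by
  intro x
  simp only
  rw [← Equiv.sum_comp (Equiv.addRight (1 : ZMod n))
    (fun i : ZMod n => x i * x (i + a) * x (i + b))]
  apply Finset.sum_congr rfl
  intro i _
  simp only [Equiv.coe_addRight]
  ring_nf

lemma rotSym_cubicMRS (j k : ℕ) : rotSym (cubicMRS n j k) := rotSym_sum _ _

lemma rotSym_permAct_sigma {f : BF n} (hf : rotSym f) (u : (ZMod n)ˣ) :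
    rotSym (permAct (sigmaPerm u) f) := by
  intro x
  show f (fun i => x ((u : ZMod n) * i + 1)) = f (fun i => x ((u : ZMod n) * i))
  have h1 : (fun i : ZMod n => x ((u : ZMod n) * i + 1))
      = fun i => (fun j : ZMod n => x ((u : ZMod n) * j)) (i + ((u⁻¹ : (ZMod n)ˣ) : ZMod n)) := by
    funext i
    congr 1
    rw [mul_add, Units.mul_inv]
  rw [h1]
  exact rotSym_shift hf _ (fun j => x ((u : ZMod n) * j))


lemma permAct_affine {f : BF n} (hf : rotSym f) (α : ZMod n) (u : (ZMod n)ˣ)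
    (μ : Equiv.Perm (ZMod n)) (hμ : ∀ i, μ i = α + (u : ZMod n) * i) :
    permAct μ f = permAct (sigmaPerm u) f := by
  funext x
  show f (fun i => x (μ i)) = f (fun i => x ((u : ZMod n) * i))
  have h1 : (fun i : ZMod n => x (μ i))
      = fun i => (fun j : ZMod n => x ((u : ZMod n) * j)) (i + ((u⁻¹ : (ZMod n)ˣ) : ZMod n) * α) := by
    funext i
    rw [hμ i]
    congr 1
    rw [mul_add, ← mul_assoc, Units.mul_inv, one_mul, add_comm]
  rw [h1]
  exact rotSym_shift hf _ (fun j => x ((u : ZMod n) * j))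

lemma dvd_small {m a : ℕ} (h : m ∣ a) (h1 : 0 < a) (h2 : a < 2*m) : a = m := by
  rcases h with ⟨k, rfl⟩
  match k with
  | 0 => omega
  | 1 => omega
  | (k+2) =>
    have : m * 2 ≤ m * (k+2) := Nat.mul_le_mul_left m (by omega)
    omega

lemma dvd_small3 {m a : ℕ} (h : m ∣ a) (h1 : 0 < a) (h2 : a < 3*m) : a = m ∨ a = 2*m := by
  rcases h with ⟨k, rfl⟩
  match k with
  | 0 => omega
  | 1 => omega
  | 2 => omega
  | (k+3) =>
    have : m * 3 ≤ m * (k+3) := Nat.mul_le_mul_left m (by omega)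
    omega

lemma two_torsion_unique {x y : ZMod n} (hx : x + x = 0) (hy : y + y = 0)
    (hx0 : x ≠ 0) (hy0 : y ≠ 0) : x = y := by
  have key : ∀ z : ZMod n, z + z = 0 → z ≠ 0 → 2 * z.val = n := by
    intro z hz hz0
    have h1 : ((z.val + z.val : ℕ) : ZMod n) = 0 := by
      push_cast [natCast_val_eq]; exact hz
    rw [ZMod.natCast_eq_zero_iff] at h1
    have h2 : z.val < n := ZMod.val_lt z
    have h3 : z.val ≠ 0 := fun h => hz0 (by rw [← natCast_val_eq z, h]; simp)
    have := dvd_small h1 (by omega) (by omega)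
    omega
  have hvx := key x hx hx0
  have hvy := key y hy hy0
  have : x.val = y.val := by omega
  rw [← natCast_val_eq x, ← natCast_val_eq y, this]

lemma three_torsion_cases {x y : ZMod n} (hx : x + x + x = 0) (hy : y + y + y = 0)
    (hx0 : x ≠ 0) (hy0 : y ≠ 0) : y = x ∨ y = x + x := by
  have key : ∀ z : ZMod n, z + z + z = 0 → z ≠ 0 → 3 * z.val = n ∨ 3 * z.val = 2 * n := by
    intro z hz hz0
    have h1 : ((z.val + z.val + z.val : ℕ) : ZMod n) = 0 := by
      push_cast [natCast_val_eq]; exact hz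
    rw [ZMod.natCast_eq_zero_iff] at h1
    have h2 : z.val < n := ZMod.val_lt z
    have h3 : z.val ≠ 0 := fun h => hz0 (by rw [← natCast_val_eq z, h]; simp)
    have := dvd_small3 h1 (by omega) (by omega)
    omega
  have hvx := key x hx hx0
  have hvy := key y hy hy0
  rcases hvx with h1 | h1 <;> rcases hvy with h2 | h2
  · left
    have : x.val = y.val := by omega
    rw [← natCast_val_eq x, ← natCast_val_eq y, this]
  · right
    have hv : y.val = 2 * x.val := by omega
    rw [← natCast_val_eq x, ← natCast_val_eq y, hv]
    push_cast; ring
  · -- 3x.val = 2n, 3y.val = n: x.val = 2*y.val, so x = y + y, then y = x+x using 3y=0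
    right
    have hv : x.val = 2 * y.val := by omega
    have hxy : x = y + y := by
      rw [← natCast_val_eq x, ← natCast_val_eq y, hv]; push_cast; ring
    rw [hxy]
    linear_combination -hy
  · left
    have : x.val = y.val := by omega
    rw [← natCast_val_eq x, ← natCast_val_eq y, this]

/-- shifted Finset -/
def shc (a : ZMod n) (U : Finset (ZMod n)) : Finset (ZMod n) := U.image (· + a)

lemma shc_zero (U : Finset (ZMod n)) : shc 0 U = U := by simp [shc]

lemma shc_shc (a b : ZMod n) (U : Finset (ZMod n)) : shc b (shc a U) = shc (a+b) U := by
  unfold shc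
  rw [Finset.image_image]; apply Finset.image_congr; intro x _; simp [add_assoc]

lemma shc_card (a : ZMod n) (U : Finset (ZMod n)) : (shc a U).card = U.card :=
  Finset.card_image_of_injective _ (add_left_injective a)

lemma shc_cancel {a b : ZMod n} {U : Finset (ZMod n)} (h : shc a U = shc b U) :
    shc (a - b) U = U := by
  have := congrArg (shc (-b)) h
  rw [shc_shc, shc_shc] at this
  rw [add_neg_cancel, shc_zero] at this
  simpa [sub_eq_add_neg] using this

lemma mem_shc {a x : ZMod n} {U : Finset (ZMod n)} : x ∈ shc a U ↔ x - a ∈ U := by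
  unfold shc
  rw [Finset.mem_image]
  constructor
  · rintro ⟨s, hs, rfl⟩; simpa using hs
  · intro h; exact ⟨x - a, h, by ring⟩

lemma shc_insert (a x : ZMod n) (U : Finset (ZMod n)) :
    shc a (insert x U) = insert (x + a) (shc a U) := by simp [shc]

lemma shc_singleton (a x : ZMod n) : shc a ({x} : Finset (ZMod n)) = {x + a} := by simp [shc]
/-- The triple of consecutive μ-values. -/
def Tri (μ : Equiv.Perm (ZMod n)) (i : ZMod n) : Finset (ZMod n) := {μ i, μ (i+1), μ (i+2)}

lemma num_ne_zero (hn : 4 < n) :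
    (1:ZMod n) ≠ 0 ∧ (2:ZMod n) ≠ 0 ∧ (3:ZMod n) ≠ 0 ∧ (4:ZMod n) ≠ 0 := by
  refine ⟨?_, ?_, ?_, ?_⟩
  · have := cast_ne_zero (n := n) (k := 1) (by omega) (by omega); simpa using this
  · have := cast_ne_zero (n := n) (k := 2) (by omega) (by omega); simpa using this
  · have := cast_ne_zero (n := n) (k := 3) (by omega) (by omega); simpa using this
  · have := cast_ne_zero (n := n) (k := 4) (by omega) (by omega); simpa using this

lemma Tri_card (hn : 4 < n) (μ : Equiv.Perm (ZMod n)) (i : ZMod n) : (Tri μ i).card = 3 := by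
  obtain ⟨h1, h2, -, -⟩ := num_ne_zero hn
  refine Finset.card_eq_three.mpr ⟨μ i, μ (i+1), μ (i+2), ?_, ?_, ?_, rfl⟩
  · exact μ.injective.ne (fun h => h1 (by linear_combination -h))
  · exact μ.injective.ne (fun h => h2 (by linear_combination -h))
  · exact μ.injective.ne (fun h => h1 (by linear_combination -h))

lemma Tri_inj (hn : 4 < n) (μ : Equiv.Perm (ZMod n)) : Function.Injective (Tri μ) := by
  obtain ⟨h1, h2, h3, h4⟩ := num_ne_zero hn
  intro i j h
  have himg : ∀ k : ZMod n, Tri μ k = Finset.image μ {k, k+1, k+2} := by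
    intro k; simp [Tri]
  rw [himg, himg] at h
  have h2' := Finset.image_injective μ.injective h
  have hi : i ∈ ({j, j+1, j+2} : Finset (ZMod n)) := by
    rw [← h2']; exact Finset.mem_insert_self _ _
  have hj : j ∈ ({i, i+1, i+2} : Finset (ZMod n)) := by
    rw [h2']; exact Finset.mem_insert_self _ _
  simp only [Finset.mem_insert, Finset.mem_singleton] at hi hj
  rcases hi with hi | hi | hi
  · exact hi
  · subst hi
    rcases hj with hj | hj | hj
    · exact absurd (show (1:ZMod n) = 0 by linear_combination -hj) h1
    · exact absurd (show (2:ZMod n) = 0 by linear_combination -hj) h2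
    · exact absurd (show (3:ZMod n) = 0 by linear_combination -hj) h3
  · subst hi
    rcases hj with hj | hj | hj
    · exact absurd (show (2:ZMod n) = 0 by linear_combination -hj) h2
    · exact absurd (show (3:ZMod n) = 0 by linear_combination -hj) h3
    · exact absurd (show (4:ZMod n) = 0 by linear_combination -hj) h4

lemma count_eq_of_cast_eq {a b : ℕ} (ha : a ≤ 1) (hb : b ≤ 1) (h : (a : ZMod 2) = b) : a = b := by
  interval_cases a <;> interval_cases b <;> simp_all

lemma shift_closed (hn : 4 < n) (μ : Equiv.Perm (ZMod n))
    (h : rotSym (permAct μ (cubicMRS n 2 3))) :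
    ∀ i, ∃ j, Tri μ j = shc 1 (Tri μ i) := by
  classical
  obtain ⟨h1, h2, h3, h4⟩ := num_ne_zero (n := n) hn
  have hcub : cubicMRS n 2 3 = fun x => ∑ i : ZMod n, x i * x (i+1) * x (i+2) := by
    unfold cubicMRS
    norm_num
  have h' : ∀ x : ZMod n → ZMod 2,
      (∑ i : ZMod n, x (μ i + 1) * x (μ (i+1) + 1) * x (μ (i+2) + 1))
        = ∑ i : ZMod n, x (μ i) * x (μ (i+1)) * x (μ (i+2)) := by
    intro x
    have := h x
    simp only [hcub, permAct] at this
    exact this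
  -- key counting equivalence
  have key : ∀ U : Finset (ZMod n), U.card = 3 →
      ((∃ i, Tri μ i = U) ↔ (∃ i, Tri μ i = shc (-1) U)) := by
    intro U hU
    set x : ZMod n → ZMod 2 := fun v => if v ∈ U then (1:ZMod 2) else 0 with hxdef
    have hterm : ∀ a b c : ZMod n, a ≠ b → a ≠ c → b ≠ c →
        x a * x b * x c = if ({a,b,c} : Finset (ZMod n)) = U then 1 else 0 := by
      intro a b c hab hac hbc
      by_cases ha : a ∈ U <;> by_cases hb : b ∈ U <;> by_cases hc : c ∈ U <;>
        simp only [hxdef, ha, hb, hc, if_true, if_false, mul_one, mul_zero, one_mul, zero_mul]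
      · rw [if_pos]
        apply Finset.eq_of_subset_of_card_le
        · intro v hv
          simp only [Finset.mem_insert, Finset.mem_singleton] at hv
          rcases hv with rfl | rfl | rfl <;> assumption
        · rw [hU]
          rw [Finset.card_eq_three.mpr ⟨a,b,c,hab,hac,hbc,rfl⟩]
      all_goals rw [if_neg]
      all_goals intro hEq
      all_goals subst hEq
      all_goals simp_all
    have hne1 : ∀ i : ZMod n, μ i ≠ μ (i+1) := fun i =>
      μ.injective.ne (fun hq => h1 (by linear_combination -hq))
    have hne2 : ∀ i : ZMod n, μ i ≠ μ (i+2) := fun i =>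
      μ.injective.ne (fun hq => h2 (by linear_combination -hq))
    have hne3 : ∀ i : ZMod n, μ (i+1) ≠ μ (i+2) := fun i =>
      μ.injective.ne (fun hq => h1 (by linear_combination -hq))
    have hadd : ∀ a b : ZMod n, a + 1 ≠ b + 1 ↔ a ≠ b := by
      intro a b; constructor
      · intro hq hq2; exact hq (by rw [hq2])
      · intro hq hq2; exact hq (by linear_combination hq2)
    have hx := h' x
    have hRHS : (∑ i : ZMod n, x (μ i) * x (μ (i+1)) * x (μ (i+2)))
        = ((Finset.univ.filter (fun i : ZMod n => Tri μ i = U)).card : ZMod 2) := by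
      rw [← Finset.sum_boole]
      apply Finset.sum_congr rfl
      intro i _
      rw [hterm _ _ _ (hne1 i) (hne2 i) (hne3 i)]
      rfl
    have hLHS : (∑ i : ZMod n, x (μ i + 1) * x (μ (i+1) + 1) * x (μ (i+2) + 1))
        = ((Finset.univ.filter (fun i : ZMod n => Tri μ i = shc (-1) U)).card : ZMod 2) := by
      rw [← Finset.sum_boole]
      apply Finset.sum_congr rfl
      intro i _
      rw [hterm _ _ _ ((hadd _ _).mpr (hne1 i)) ((hadd _ _).mpr (hne2 i)) ((hadd _ _).mpr (hne3 i))]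
      have hset : ({μ i + 1, μ (i+1) + 1, μ (i+2) + 1} : Finset (ZMod n)) = shc 1 (Tri μ i) := by
        simp [Tri, shc_insert, shc_singleton]
      rw [hset]
      congr 1
      apply propext
      constructor
      · intro hq
        rw [← hq, shc_shc]
        simp [shc_zero]
      · intro hq
        rw [hq, shc_shc]
        simp [shc_zero]
    have hcount : (Finset.univ.filter (fun i : ZMod n => Tri μ i = shc (-1) U)).card
        = (Finset.univ.filter (fun i : ZMod n => Tri μ i = U)).card := by
      apply count_eq_of_cast_eq
      · apply Finset.card_le_one.mpr
        intro a ha b hb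
        simp only [Finset.mem_filter] at ha hb
        exact Tri_inj hn μ (ha.2.trans hb.2.symm)
      · apply Finset.card_le_one.mpr
        intro a ha b hb
        simp only [Finset.mem_filter] at ha hb
        exact Tri_inj hn μ (ha.2.trans hb.2.symm)
      · rw [← hLHS, ← hRHS]; exact hx
    constructor
    · rintro ⟨i, hi⟩
      have : 0 < (Finset.univ.filter (fun i : ZMod n => Tri μ i = U)).card :=
        Finset.card_pos.mpr ⟨i, by simp [hi]⟩
      rw [← hcount] at this
      obtain ⟨j, hj⟩ := Finset.card_pos.mp this
      simp only [Finset.mem_filter] at hj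
      exact ⟨j, hj.2⟩
    · rintro ⟨i, hi⟩
      have : 0 < (Finset.univ.filter (fun i : ZMod n => Tri μ i = shc (-1) U)).card :=
        Finset.card_pos.mpr ⟨i, by simp [hi]⟩
      rw [hcount] at this
      obtain ⟨j, hj⟩ := Finset.card_pos.mp this
      simp only [Finset.mem_filter] at hj
      exact ⟨j, hj.2⟩
  intro i
  have hU : (shc 1 (Tri μ i)).card = 3 := by rw [shc_card, Tri_card hn]
  refine ((key _ hU).mpr ⟨i, ?_⟩)
  rw [shc_shc]
  simp [shc_zero]

lemma stab_struct {U : Finset (ZMod n)} (hU : U.card = 3) {h : ZMod n} (hh0 : h ≠ 0)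
    (hinv : shc h U = U) :
    (∀ t ∈ U, t + h ∈ U) ∧ (h + h ≠ 0) ∧ (h + h + h = 0) ∧
      (∀ t ∈ U, U = {t, t + h, t + h + h}) := by
  have hcl : ∀ t ∈ U, t + h ∈ U := by
    intro t ht
    rw [← hinv]
    exact Finset.mem_image_of_mem _ ht
  have h2 : h + h ≠ 0 := by
    intro h2
    obtain ⟨a, b, cc, hab, hac, hbc, hU3⟩ := Finset.card_eq_three.mp hU
    have ha : a ∈ U := by rw [hU3]; simp
    have hb : b ∈ U := by rw [hU3]; simp
    have hc : cc ∈ U := by rw [hU3]; simp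
    have ha' : a + h ∈ U := hcl a ha
    rw [hU3] at ha'
    simp only [Finset.mem_insert, Finset.mem_singleton] at ha'
    rcases ha' with hq | hq | hq
    · exact hh0 (by linear_combination hq)
    · -- a + h = b
      have hb' : b + h ∈ U := hcl b hb
      have hba : b + h = a := by linear_combination h2 - hq
      have hc' : cc + h ∈ U := hcl cc hc
      rw [hU3] at hc'
      simp only [Finset.mem_insert, Finset.mem_singleton] at hc'
      rcases hc' with hq' | hq' | hq'
      · exact hbc (by linear_combination hba - hq')
      · exact hac (by linear_combination hq - hq')
      · exact hh0 (by linear_combination hq')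
    · -- a + h = cc
      have hc' : cc + h ∈ U := hcl cc hc
      have hca : cc + h = a := by linear_combination h2 - hq
      have hb' : b + h ∈ U := hcl b hb
      rw [hU3] at hb'
      simp only [Finset.mem_insert, Finset.mem_singleton] at hb'
      rcases hb' with hq' | hq' | hq'
      · exact hbc (by linear_combination hq' - hca)
      · exact hh0 (by linear_combination hq')
      · exact hab (by linear_combination hq - hq')
  have hrep : ∀ t ∈ U, U = {t, t + h, t + h + h} := by
    intro t ht
    have h1 : t + h ∈ U := hcl t ht
    have h2' : t + h + h ∈ U := hcl _ h1
    have hsub : ({t, t + h, t + h + h} : Finset (ZMod n)) ⊆ U := by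
      intro v hv
      simp only [Finset.mem_insert, Finset.mem_singleton] at hv
      rcases hv with rfl | rfl | rfl <;> assumption
    have hcard : ({t, t + h, t + h + h} : Finset (ZMod n)).card = 3 := by
      refine Finset.card_eq_three.mpr ⟨t, t+h, t+h+h, ?_, ?_, ?_, rfl⟩
      · exact fun hq => hh0 (by linear_combination -hq)
      · exact fun hq => h2 (by linear_combination -hq)
      · exact fun hq => hh0 (by linear_combination -hq)
    exact (Finset.eq_of_subset_of_card_le hsub (by omega)).symm
  have h3 : h + h + h = 0 := by
    obtain ⟨t, ht⟩ := Finset.card_pos.mp (by omega : 0 < U.card)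
    have h1 : t + h ∈ U := hcl t ht
    have h2' : t + h + h ∈ U := hcl _ h1
    have h3' : t + h + h + h ∈ U := hcl _ h2'
    rw [hrep t ht] at h3'
    simp only [Finset.mem_insert, Finset.mem_singleton] at h3'
    rcases h3' with hq | hq | hq
    · linear_combination hq
    · exact absurd (show h + h = 0 by linear_combination hq) h2
    · exact absurd (show h = 0 by linear_combination hq) hh0
  exact ⟨hcl, h2, h3, hrep⟩

lemma exists_trivial_stab (hn : 4 < n) (μ : Equiv.Perm (ZMod n)) :
    ∃ i1 : ZMod n, ∀ a, shc a (Tri μ i1) = Tri μ i1 → a = 0 := by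
  obtain ⟨h1, h2, h3, h4⟩ := num_ne_zero (n := n) hn
  by_cases hA : ∀ a, shc a (Tri μ 0) = Tri μ 0 → a = 0
  · exact ⟨0, hA⟩
  push_neg at hA
  obtain ⟨h, hinv, hh0⟩ := hA
  refine ⟨1, ?_⟩
  intro a hinv'
  by_contra ha0
  obtain ⟨hcl, hh2, hh3, hrep⟩ := stab_struct (Tri_card hn μ 0) hh0 hinv
  obtain ⟨hcl', ha2, ha3, hrep'⟩ := stab_struct (Tri_card hn μ 1) ha0 hinv'
  have hcases := three_torsion_cases hh3 ha3 hh0 ha0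
  have hclA : ∀ t ∈ Tri μ 0, t + a ∈ Tri μ 0 := by
    rcases hcases with rfl | rfl
    · exact hcl
    · intro t ht
      have := hcl _ (hcl t ht)
      rwa [add_assoc] at this
  have hμ1 : μ 1 ∈ Tri μ 0 := by
    have : μ (0 + 1) ∈ Tri μ 0 := by simp [Tri]
    simpa using this
  have hT1 : Tri μ 1 = {μ 1, μ 1 + a, μ 1 + a + a} := hrep' (μ 1) (by simp [Tri])
  have hsub : Tri μ 1 ⊆ Tri μ 0 := by
    rw [hT1]
    intro v hv
    simp only [Finset.mem_insert, Finset.mem_singleton] at hv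
    rcases hv with rfl | rfl | rfl
    · exact hμ1
    · exact hclA _ hμ1
    · exact hclA _ (hclA _ hμ1)
  have hTeq : Tri μ 1 = Tri μ 0 :=
    Finset.eq_of_subset_of_card_le hsub (by rw [Tri_card hn, Tri_card hn])
  have := Tri_inj hn μ hTeq
  exact h1 this

lemma ap_of_two_le_card {U : Finset (ZMod n)} (hU : U.card = 3) {d : ZMod n}
    (hd : 2 ≤ (U ∩ shc d U).card) :
    (∃ e, U = {e, e + d, e + 2*d}) ∨ 2*d = 0 := by
  by_cases h2 : 2*d = 0
  · right; exact h2
  left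
  have hd0 : d ≠ 0 := fun h => h2 (by rw [h]; ring)
  obtain ⟨t1, ht1, t2, ht2, hne⟩ := Finset.one_lt_card.mp (show 1 < (U ∩ shc d U).card by omega)
  obtain ⟨ht1U, ht1s⟩ := Finset.mem_inter.mp ht1
  obtain ⟨ht2U, ht2s⟩ := Finset.mem_inter.mp ht2
  rw [mem_shc] at ht1s ht2s
  have hkey : t2 = t1 + d ∨ t1 = t2 + d := by
    by_contra hcon
    push_neg at hcon
    obtain ⟨hc1, hc2⟩ := hcon
    have hsub : ({t1, t2, t1 - d, t2 - d} : Finset (ZMod n)) ⊆ U := by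
      intro v hv
      simp only [Finset.mem_insert, Finset.mem_singleton] at hv
      rcases hv with rfl | rfl | rfl | rfl <;> assumption
    have e2 : t1 ≠ t1 - d := fun hq => hd0 (by linear_combination hq)
    have e3 : t1 ≠ t2 - d := fun hq => hc1 (by linear_combination -hq)
    have e4 : t2 ≠ t1 - d := fun hq => hc2 (by linear_combination -hq)
    have e5 : t2 ≠ t2 - d := fun hq => hd0 (by linear_combination hq)
    have e6 : t1 - d ≠ t2 - d := fun hq => hne (by linear_combination hq)
    have hcard : ({t1, t2, t1 - d, t2 - d} : Finset (ZMod n)).card = 4 := by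
      rw [Finset.card_insert_of_notMem (by simp [hne, e2, e3]),
        Finset.card_insert_of_notMem (by simp [e4, e5]),
        Finset.card_insert_of_notMem (by simp [e6]), Finset.card_singleton]
    have := Finset.card_le_card hsub
    omega
  have hAP : ∃ m, m ∈ U ∧ m - d ∈ U ∧ m + d ∈ U := by
    rcases hkey with hq | hq
    · exact ⟨t1, ht1U, ht1s, by rw [← hq]; exact ht2U⟩
    · exact ⟨t2, ht2U, ht2s, by rw [← hq]; exact ht1U⟩
  obtain ⟨m, hm1, hm2, hm3⟩ := hAP
  refine ⟨m - d, ?_⟩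
  have hsub : ({m - d, m - d + d, m - d + 2*d} : Finset (ZMod n)) ⊆ U := by
    intro v hv
    simp only [Finset.mem_insert, Finset.mem_singleton] at hv
    rcases hv with rfl | rfl | rfl
    · exact hm2
    · rwa [show m - d + d = m by ring]
    · rwa [show m - d + 2*d = m + d by ring]
  have hcard : ({m - d, m - d + d, m - d + 2*d} : Finset (ZMod n)).card = 3 := by
    refine Finset.card_eq_three.mpr ⟨_, _, _, ?_, ?_, ?_, rfl⟩
    · exact fun hq => hd0 (by linear_combination -hq)
    · exact fun hq => h2 (by linear_combination -hq)
    · exact fun hq => hd0 (by linear_combination -hq)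
  refine (Finset.eq_of_subset_of_card_le hsub ?_).symm
  rw [hU, hcard]

lemma key_affine (hn : 4 < n) (μ : Equiv.Perm (ZMod n))
    (h : rotSym (permAct μ (cubicMRS n 2 3))) :
    ∃ (α : ZMod n) (u : (ZMod n)ˣ), ∀ i, μ i = α + (u : ZMod n) * i := by
  classical
  obtain ⟨h1, h2, h3, h4⟩ := num_ne_zero (n := n) hn
  have hclosed := shift_closed hn μ h
  obtain ⟨i1, hstab⟩ := exists_trivial_stab hn μ
  set S := Tri μ i1 with hSdef
  have hS3 : S.card = 3 := Tri_card hn μ i1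
  -- every translate of S appears among the triples
  have hiter : ∀ (k : ℕ) (i : ZMod n), ∃ j, Tri μ j = shc (k : ZMod n) (Tri μ i) := by
    intro k
    induction k with
    | zero => intro i; exact ⟨i, by simp [shc_zero]⟩
    | succ m ih =>
      intro i
      obtain ⟨j, hj⟩ := ih i
      obtain ⟨j', hj'⟩ := hclosed j
      refine ⟨j', ?_⟩
      rw [hj', hj, shc_shc]
      congr 1
      push_cast
      ring
  have hall : ∀ a : ZMod n, ∃ j, Tri μ j = shc a S := by
    intro a
    obtain ⟨j, hj⟩ := hiter a.val i1
    rw [natCast_val_eq] at hj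
    exact ⟨j, hj⟩
  choose G hG using hall
  have hGinj : Function.Injective G := by
    intro a b hab
    have hq : shc a S = shc b S := by rw [← hG a, ← hG b, hab]
    have := hstab _ (shc_cancel hq)
    exact sub_eq_zero.mp this
  have hGsurj : Function.Surjective G := Finite.surjective_of_injective hGinj
  have hcex : ∀ j, ∃ a, Tri μ j = shc a S := by
    intro j
    obtain ⟨a, ha⟩ := hGsurj j
    exact ⟨a, by rw [← ha, hG]⟩
  choose c hc using hcex
  have hcinj : Function.Injective c := by
    intro a b hab
    apply Tri_inj hn μ
    rw [hc a, hc b, hab]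
  have hcsurj : Function.Surjective c := Finite.surjective_of_injective hcinj
  have hci1 : c i1 = 0 := by
    apply hstab
    rw [← hc i1]
  set d : ZMod n → ZMod n := fun i => c (i+1) - c i with hddef
  -- basic properties of d
  have hd0 : ∀ i, d i ≠ 0 := by
    intro i hq
    have hcc : c (i+1) = c i := by
      have : c (i+1) - c i = 0 := hq
      linear_combination this
    have := hcinj hcc
    exact h1 (by linear_combination this)
  have hdd : ∀ i, d i + d (i+1) ≠ 0 := by
    intro i hq
    have hkey : c (i+2) - c i = 0 := by
      have hidx : i + 1 + 1 = i + 2 := by ring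
      have : (c (i+1) - c i) + (c (i+1+1) - c (i+1)) = 0 := hq
      rw [hidx] at this
      linear_combination this
    have := hcinj (show c (i+2) = c i by linear_combination hkey)
    exact h2 (by linear_combination this)
  -- overlap of consecutive triples
  have hov : ∀ i, 2 ≤ ((S ∩ shc (d i) S).card) := by
    intro i
    have m1 : μ (i+1) ∈ Tri μ i := by simp [Tri]
    have m2 : μ (i+2) ∈ Tri μ i := by simp [Tri]
    have m3 : μ (i+1) ∈ Tri μ (i+1) := by simp [Tri]
    have m4 : μ (i+2) ∈ Tri μ (i+1) := by
      have hq : μ ((i+1)+1) ∈ Tri μ (i+1) := by simp [Tri]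
      rwa [show (i+1)+1 = i+2 by ring] at hq
    have hpair : ({μ (i+1), μ (i+2)} : Finset (ZMod n)) ⊆ Tri μ i ∩ Tri μ (i+1) := by
      intro v hv
      simp only [Finset.mem_insert, Finset.mem_singleton] at hv
      rcases hv with rfl | rfl
      · exact Finset.mem_inter.mpr ⟨m1, m3⟩
      · exact Finset.mem_inter.mpr ⟨m2, m4⟩
    have hpc : ({μ (i+1), μ (i+2)} : Finset (ZMod n)).card = 2 :=
      Finset.card_pair (μ.injective.ne (fun hq => h1 (by linear_combination -hq)))
    have hle := Finset.card_le_card hpair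
    have htrans : shc (c i) (S ∩ shc (d i) S) = Tri μ i ∩ Tri μ (i+1) := by
      have himg : shc (c i) (S ∩ shc (d i) S) = shc (c i) S ∩ shc (c i) (shc (d i) S) :=
        Finset.image_inter _ _ (add_left_injective _)
      rw [himg, shc_shc, hc i, hc (i+1)]
      congr 2
      simp only [hddef]
      ring
    rw [← htrans, shc_card] at hle
    omega
  -- not all d i are 2-torsion
  by_cases hdeg : ∀ i, 2 * d i = 0
  · exfalso
    have heq : d i1 = d (i1+1) :=
      two_torsion_unique (by linear_combination hdeg i1) (by linear_combination hdeg (i1+1))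
        (hd0 i1) (hd0 (i1+1))
    exact hdd i1 (by linear_combination 2 * heq + hdeg (i1+1) - heq)
  push_neg at hdeg
  obtain ⟨i2, hi2⟩ := hdeg
  rcases ap_of_two_le_card hS3 (hov i2) with ⟨e, hSap⟩ | hq
  swap
  · exact absurd hq hi2
  set p := d i2 with hpdef
  have hp1 : p ≠ 0 := hd0 i2
  have hp2 : 2*p ≠ 0 := hi2
  -- every d i is a difference of elements of S
  have hdiff : ∀ i, d i = p ∨ d i = -p ∨ d i = 2*p ∨ d i = -(2*p) := by
    intro i
    have hpos : 0 < (S ∩ shc (d i) S).card := lt_of_lt_of_le (by omega) (hov i)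
    obtain ⟨t, ht⟩ := Finset.card_pos.mp hpos
    obtain ⟨htS, hts⟩ := Finset.mem_inter.mp ht
    rw [mem_shc] at hts
    rw [hSap] at htS hts
    simp only [Finset.mem_insert, Finset.mem_singleton] at htS hts
    have hd := hd0 i
    rcases htS with rfl | rfl | rfl <;> rcases hts with hq | hq | hq
    · exact absurd (show d i = 0 by linear_combination -hq) hd
    · right; left; linear_combination -hq
    · right; right; right; linear_combination -hq
    · left; linear_combination -hq
    · exact absurd (show d i = 0 by linear_combination -hq) hd
    · right; left; linear_combination -hq
    · right; right; left; linear_combination -hq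
    · left; linear_combination -hq
    · exact absurd (show d i = 0 by linear_combination -hq) hd
  -- p is a unit
  have hmulp : ∀ i, ∃ z : ℤ, c i = (z : ZMod n) * p := by
    refine zmod_succ_induction i1 ⟨0, by rw [hci1]; push_cast; ring⟩ ?_
    rintro i ⟨z, hz⟩
    have hci : c (i+1) = c i + d i := by simp only [hddef]; ring
    rcases hdiff i with hq | hq | hq | hq
    · exact ⟨z+1, by rw [hci, hz, hq]; push_cast; ring⟩
    · exact ⟨z-1, by rw [hci, hz, hq]; push_cast; ring⟩
    · exact ⟨z+2, by rw [hci, hz, hq]; push_cast; ring⟩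
    · exact ⟨z-2, by rw [hci, hz, hq]; push_cast; ring⟩
  have hunit : IsUnit p := by
    obtain ⟨j, hj⟩ := hcsurj 1
    obtain ⟨z, hz⟩ := hmulp j
    rw [hj] at hz
    exact IsUnit.of_mul_eq_one (a := p) _ (by rw [mul_comm]; exact hz.symm)
  have hpu : p * (↑hunit.unit⁻¹ : ZMod n) = 1 := by
    have := Units.mul_inv hunit.unit
    rwa [hunit.unit_spec] at this
  have hp3 : 3*p ≠ 0 := by
    intro hq
    apply h3
    have : (3:ZMod n) = (3*p) * (↑hunit.unit⁻¹ : ZMod n) := by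
      rw [mul_assoc, hpu, mul_one]
    rw [this, hq, zero_mul]
  have hp4 : 4*p ≠ 0 := by
    intro hq
    apply h4
    have : (4:ZMod n) = (4*p) * (↑hunit.unit⁻¹ : ZMod n) := by
      rw [mul_assoc, hpu, mul_one]
    rw [this, hq, zero_mul]
  -- exclude ±2p
  have hcap2 : (S ∩ shc (2*p) S).card ≤ 1 := by
    have hsub : S ∩ shc (2*p) S ⊆ {e + 2*p} := by
      intro t ht
      obtain ⟨htS, hts⟩ := Finset.mem_inter.mp ht
      rw [mem_shc] at hts
      rw [hSap] at htS hts
      simp only [Finset.mem_insert, Finset.mem_singleton] at htS hts ⊢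
      rcases htS with rfl | rfl | rfl <;> rcases hts with hq | hq | hq
      · exact absurd (show 2*p = 0 by linear_combination -hq) hp2
      · exact absurd (show 3*p = 0 by linear_combination -hq) hp3
      · exact absurd (show 4*p = 0 by linear_combination -hq) hp4
      · exact absurd (show p = 0 by linear_combination -hq) hp1
      · exact absurd (show 2*p = 0 by linear_combination -hq) hp2
      · exact absurd (show 3*p = 0 by linear_combination -hq) hp3
      · rfl
      · exact absurd (show p = 0 by linear_combination -hq) hp1
      · exact absurd (show 2*p = 0 by linear_combination -hq) hp2
    calc (S ∩ shc (2*p) S).card ≤ ({e + 2*p} : Finset (ZMod n)).card := Finset.card_le_card hsub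
      _ = 1 := Finset.card_singleton _
  have hcapm2 : (S ∩ shc (-(2*p)) S).card ≤ 1 := by
    have hsub : S ∩ shc (-(2*p)) S ⊆ {e} := by
      intro t ht
      obtain ⟨htS, hts⟩ := Finset.mem_inter.mp ht
      rw [mem_shc] at hts
      rw [hSap] at htS hts
      simp only [Finset.mem_insert, Finset.mem_singleton] at htS hts ⊢
      rcases htS with rfl | rfl | rfl <;> rcases hts with hq | hq | hq
      · exact absurd (show 2*p = 0 by linear_combination hq) hp2
      · exact absurd (show p = 0 by linear_combination hq) hp1
      · rfl
      · exact absurd (show 3*p = 0 by linear_combination hq) hp3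
      · exact absurd (show 2*p = 0 by linear_combination hq) hp2
      · exact absurd (show p = 0 by linear_combination hq) hp1
      · exact absurd (show 4*p = 0 by linear_combination hq) hp4
      · exact absurd (show 3*p = 0 by linear_combination hq) hp3
      · exact absurd (show 2*p = 0 by linear_combination hq) hp2
    calc (S ∩ shc (-(2*p)) S).card ≤ ({e} : Finset (ZMod n)).card := Finset.card_le_card hsub
      _ = 1 := Finset.card_singleton _
  have hdiff2 : ∀ i, d i = p ∨ d i = -p := by
    intro i
    rcases hdiff i with hq | hq | hq | hq
    · exact Or.inl hq
    · exact Or.inr hq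
    · exfalso; have := hov i; rw [hq] at this; omega
    · exfalso; have := hov i; rw [hq] at this; omega
  -- d is constant
  have hpne : p ≠ -p := fun hq => hp2 (by linear_combination hq)
  have hstep : ∀ i, d (i+1) = d i := by
    intro i
    rcases hdiff2 i with hq | hq <;> rcases hdiff2 (i+1) with hq' | hq'
    · rw [hq, hq']
    · exfalso; exact hdd i (by rw [hq, hq']; ring)
    · exfalso; exact hdd i (by rw [hq, hq']; ring)
    · rw [hq, hq']
  have hconst : ∀ i, d i = d i1 :=
    zmod_succ_induction i1 rfl (fun i hi => by rw [hstep i, hi])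
  set r := d i1 with hrdef
  have hr : r = p ∨ r = -p := hdiff2 i1
  have hcf : ∀ i, c i = (i - i1) * r := by
    refine zmod_succ_induction i1 (by rw [hci1]; ring) ?_
    intro i hi
    have hci : c (i+1) = c i + d i := by simp only [hddef]; ring
    rw [hci, hi, hconst i]
    ring
  -- locate μ i
  have hmem1 : ∀ i, μ i - c i ∈ S := by
    intro i
    rw [← mem_shc, ← hc i]
    simp [Tri]
  have hmem2 : ∀ i, μ i - c (i-2) ∈ S := by
    intro i
    rw [← mem_shc, ← hc (i-2)]
    have hq : μ ((i-2)+2) ∈ Tri μ (i-2) := by simp [Tri]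
    rwa [show (i-2)+2 = i by ring] at hq
  have hc2 : ∀ i, c (i-2) = c i - 2*r := by
    intro i
    rw [hcf, hcf]
    ring
  rcases hr with hrp | hrm
  · -- r = p
    refine ⟨e - i1 * p, hunit.unit, ?_⟩
    intro i
    rw [hunit.unit_spec]
    have ha := hmem1 i
    have hb := hmem2 i
    rw [hc2 i, hrp] at hb
    rw [hSap] at ha hb
    simp only [Finset.mem_insert, Finset.mem_singleton] at ha hb
    have hcfi := hcf i
    rw [hrp] at hcfi
    rcases ha with ha | ha | ha <;> rcases hb with hb | hb | hb
    · exact absurd (show 2*p = 0 by linear_combination hb - ha) hp2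
    · exact absurd (show p = 0 by linear_combination hb - ha) hp1
    · linear_combination ha + hcfi
    · exact absurd (show 3*p = 0 by linear_combination hb - ha) hp3
    · exact absurd (show 2*p = 0 by linear_combination hb - ha) hp2
    · exact absurd (show p = 0 by linear_combination hb - ha) hp1
    · exact absurd (show 4*p = 0 by linear_combination hb - ha) hp4
    · exact absurd (show 3*p = 0 by linear_combination hb - ha) hp3
    · exact absurd (show 2*p = 0 by linear_combination hb - ha) hp2
  · -- r = -p
    have hunitm : IsUnit (-p) := hunit.neg
    refine ⟨e + 2*p + i1 * p, hunitm.unit, ?_⟩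
    intro i
    rw [hunitm.unit_spec]
    have ha := hmem1 i
    have hb := hmem2 i
    rw [hc2 i, hrm] at hb
    rw [hSap] at ha hb
    simp only [Finset.mem_insert, Finset.mem_singleton] at ha hb
    have hcfi := hcf i
    rw [hrm] at hcfi
    rcases ha with ha | ha | ha <;> rcases hb with hb | hb | hb
    · exact absurd (show 2*p = 0 by linear_combination ha - hb) hp2
    · exact absurd (show 3*p = 0 by linear_combination ha - hb) hp3
    · exact absurd (show 4*p = 0 by linear_combination ha - hb) hp4
    · exact absurd (show p = 0 by linear_combination ha - hb) hp1
    · exact absurd (show 2*p = 0 by linear_combination ha - hb) hp2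
    · exact absurd (show 3*p = 0 by linear_combination ha - hb) hp3
    · linear_combination ha + hcfi
    · exact absurd (show p = 0 by linear_combination ha - hb) hp1
    · exact absurd (show 2*p = 0 by linear_combination ha - hb) hp2

lemma mem_cubic23 (hn : 4 < n) : cubicMRS n 2 3 ∈ cubicSetNe n :=
  ⟨2, 3, by omega, by omega, by omega, by omega, by omega, rfl⟩

lemma rotSym_of_mem {f : BF n} (hf : f ∈ cubicSetNe n) : rotSym f := by
  obtain ⟨j, k, -, -, -, -, -, rfl⟩ := hf
  exact rotSym_cubicMRS j k

lemma preservesRS_sigma (u : (ZMod n)ˣ) : preservesRS n (sigmaPerm u) :=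
  fun _ hf => rotSym_permAct_sigma (rotSym_of_mem hf) u

end RSAux

open RSAux in
theorem orbit_eq_permEquiv_class (n : ℕ) [NeZero n] (hn : 4 < n) :
    (∀ f ∈ cubicSetNe n, ∀ g ∈ cubicSetNe n,
      ((∃ μ : Equiv.Perm (ZMod n), preservesRS n μ ∧ permAct μ f = g) ↔
        (∃ u : (ZMod n)ˣ, permAct (sigmaPerm u) f = g))) ∧
    (∀ f ∈ cubicSetNe n,
      orbit n f = {g | ∃ μ : Equiv.Perm (ZMod n), preservesRS n μ ∧ permAct μ f = g}) := by
  constructor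
  · intro f hf g hg
    constructor
    · rintro ⟨μ, hμ, rfl⟩
      obtain ⟨α, u, hform⟩ := key_affine hn μ (hμ _ (mem_cubic23 hn))
      exact ⟨u, (permAct_affine (rotSym_of_mem hf) α u μ hform).symm⟩
    · rintro ⟨u, rfl⟩
      exact ⟨sigmaPerm u, preservesRS_sigma u, rfl⟩
  · intro f hf
    ext g
    simp only [orbit, Set.mem_setOf_eq]
    constructor
    · rintro ⟨u, rfl⟩
      exact ⟨sigmaPerm u, preservesRS_sigma u, rfl⟩
    · rintro ⟨μ, hμ, rfl⟩
      obtain ⟨α, u, hform⟩ := key_affine hn μ (hμ _ (mem_cubic23 hn))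
      exact ⟨u, permAct_affine (rotSym_of_mem hf) α u μ hform⟩
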